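/- arXiv:1106.5949 — 2 statements merged into one kernel-verified Lean document; each statement's English description precedes it below -/
import Mathlib

section
/- Let m ≥ 2 and n ≥ 2 be integers and let a_1 ≥ a_2 ≥ ⋯ ≥ a_{m−1} ≥ 0 be integers. Then the two conditions (i) n − (a_1 + ⋯ + a_{m−1}) > 0 and (ii) m·a_{m−1} − 2(a_1 + ⋯ + a_{m−1}) ≥ 0 hold simultaneously if and only if either a_1 = ⋯ = a_{m−1} = 0, or m = 2 and 1 ≤ a_1 ≤ n − 1. -/
/-- Let `m ≥ 2`, `n ≥ 2` and `a 1 ≥ ⋯ ≥ a (m-1) ≥ 0` be integers. Then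
`n - (a 1 + ⋯ + a (m-1)) > 0` and `m * a (m-1) - 2 * (a 1 + ⋯ + a (m-1)) ≥ 0`
hold simultaneously iff either all `a i = 0`, or `m = 2` and `1 ≤ a 1 ≤ n - 1`. -/
theorem stmt_1 (m n : ℕ) (hm : 2 ≤ m) (hn : 2 ≤ n) (a : ℕ → ℤ)
    (hanti : ∀ i j, 1 ≤ i → i ≤ j → j ≤ m - 1 → a j ≤ a i)
    (hnonneg : 0 ≤ a (m - 1)) :
    (0 < (n : ℤ) - ∑ i ∈ Finset.Icc 1 (m - 1), a i ∧
      0 ≤ (m : ℤ) * a (m - 1) - 2 * ∑ i ∈ Finset.Icc 1 (m - 1), a i) ↔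
    ((∀ i, 1 ≤ i → i ≤ m - 1 → a i = 0) ∨ (m = 2 ∧ 1 ≤ a 1 ∧ a 1 ≤ (n : ℤ) - 1)) := by
  have hterm : ∀ i ∈ Finset.Icc 1 (m - 1), a (m - 1) ≤ a i := by
    intro i hi
    simp only [Finset.mem_Icc] at hi
    exact hanti i (m - 1) hi.1 hi.2 le_rfl
  constructor
  · rintro ⟨h1, h2⟩
    have hSlb : ((m : ℤ) - 1) * a (m - 1) ≤ ∑ i ∈ Finset.Icc 1 (m - 1), a i := by
      have hc : ∑ _i ∈ Finset.Icc 1 (m - 1), a (m - 1) = ((m : ℤ) - 1) * a (m - 1) := by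
        rw [Finset.sum_const, Nat.card_Icc, nsmul_eq_mul]
        congr 1
        have h : m - 1 + 1 - 1 = m - 1 := by omega
        rw [h]
        push_cast [Nat.cast_sub (by omega : 1 ≤ m)]
        ring
      calc ((m : ℤ) - 1) * a (m - 1) = ∑ _i ∈ Finset.Icc 1 (m - 1), a (m - 1) := hc.symm
        _ ≤ ∑ i ∈ Finset.Icc 1 (m - 1), a i := Finset.sum_le_sum hterm
    by_cases hm2 : m = 2
    · subst hm2
      norm_num at h1 h2 ⊢
      by_cases ha : a 1 = 0
      · left; intro i hi hj
        have : i = 1 := by omega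
        rw [this]; exact ha
      · right
        have h0 : 0 ≤ a 1 := by simpa using hnonneg
        exact ⟨by omega, by linarith⟩
    · have hm3 : 3 ≤ m := by omega
      have hmc : (3 : ℤ) ≤ (m : ℤ) := by exact_mod_cast hm3
      have hz : a (m - 1) = 0 := by nlinarith
      left
      have hnn : ∀ i ∈ Finset.Icc 1 (m - 1), 0 ≤ a i := by
        intro i hi; exact le_trans hnonneg (hterm i hi)
      have hsum0 : ∑ i ∈ Finset.Icc 1 (m - 1), a i = 0 := by
        have := Finset.sum_nonneg hnn
        rw [hz] at h2
        linarith
      intro i h1i h2i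
      exact (Finset.sum_eq_zero_iff_of_nonneg hnn).mp hsum0 i
        (Finset.mem_Icc.mpr ⟨h1i, h2i⟩)
  · rintro (hall | ⟨hm2, ha1, ha2⟩)
    · have hsum0 : ∑ i ∈ Finset.Icc 1 (m - 1), a i = 0 :=
        Finset.sum_eq_zero fun i hi =>
          hall i (Finset.mem_Icc.mp hi).1 (Finset.mem_Icc.mp hi).2
      have hz : a (m - 1) = 0 := hall (m - 1) (by omega) le_rfl
      rw [hsum0, hz]
      constructor
      · have : (2 : ℤ) ≤ (n : ℤ) := by exact_mod_cast hn
        linarith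
      · ring_nf; positivity
    · subst hm2
      norm_num
      have : (2 : ℤ) ≤ (n : ℤ) := by exact_mod_cast hn
      linarith
end

section
/- Let m ≥ 2 be an integer and let a_1 ≥ a_2 ≥ ⋯ ≥ a_{m−1} ≥ a_m = 0 be integers. In the polynomial ring ℤ[X,Y], define d_i = X + (a_1 − a_i)·Y for 1 ≤ i ≤ m. Then for every strictly increasing sequence of indices 1 ≤ i_1 < i_2 < ⋯ < i_k ≤ m and every integer l ≥ 0, there exist nonnegative integers c_0, c_1, …, c_k such that d_{i_1}·d_{i_2}⋯d_{i_k}·Y^l = ∑_{p=0}^{k} c_p·(d_1·d_2⋯d_p)·Y^{k+l−p} (where the product d_1⋯d_p is interpreted as 1 when p = 0). -/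
open MvPolynomial

noncomputable def dd (a : ℕ → ℤ) (i : ℕ) : MvPolynomial (Fin 2) ℤ :=
  X 0 + C (a 1 - a i) * X 1

lemma dd_shift (a : ℕ → ℤ) (i j : ℕ) :
    dd a j = dd a i + C (a i - a j) * X 1 := by
  simp only [dd]
  rw [show a 1 - a j = (a 1 - a i) + (a i - a j) by ring, map_add]
  ring

lemma helper (m : ℕ) (a : ℕ → ℤ)
    (hanti : ∀ i j, 1 ≤ i → i ≤ j → j ≤ m → a j ≤ a i) :
    ∀ (k : ℕ), k ≤ m → ∀ (l : ℕ) (b : Fin k → ℕ),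
    ∃ c : ℕ → ℕ,
      (∏ s : Fin k, (dd a (s.val + 1) + C ((b s : ℤ)) * X 1)) * (X 1) ^ l =
        ∑ p ∈ Finset.range (k + 1),
          C ((c p : ℤ)) * (∏ q ∈ Finset.Icc 1 p, dd a q) * (X 1) ^ (k + l - p) := by
  intro k
  induction k with
  | zero =>
    intro _ l b
    refine ⟨fun _ => 1, ?_⟩
    simp
  | succ k ih =>
    intro hk l b
    obtain ⟨c1, hc1⟩ := ih (by omega) l (fun s => b s.castSucc)
    obtain ⟨c2, hc2⟩ := ih (by omega) (l + 1) (fun s => b s.castSucc)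
    have he : ∀ p, p ≤ k → (((a (p + 1) - a (k + 1)).toNat : ℤ)) = a (p + 1) - a (k + 1) := by
      intro p hp
      have := hanti (p + 1) (k + 1) (by omega) (by omega) (by omega)
      omega
    set g2 : ℕ → ℕ := fun p =>
      c1 p * (a (p + 1) - a (k + 1)).toNat + b (Fin.last k) * c2 p with hg2def
    refine ⟨fun p => (if p = 0 then 0 else c1 (p - 1)) + (if p ≤ k then g2 p else 0), ?_⟩
    have hRHS : (∑ p ∈ Finset.range (k + 1 + 1),
          C ((((if p = 0 then 0 else c1 (p - 1)) + (if p ≤ k then g2 p else 0) : ℕ)) : ℤ)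
            * (∏ q ∈ Finset.Icc 1 p, dd a q) * (X 1) ^ (k + 1 + l - p))
        = (∑ p ∈ Finset.range (k + 1),
            C ((c1 p : ℤ)) * (∏ q ∈ Finset.Icc 1 (p + 1), dd a q) * (X 1) ^ (k + l - p))
          + (∑ p ∈ Finset.range (k + 1),
            C ((g2 p : ℤ)) * (∏ q ∈ Finset.Icc 1 p, dd a q) * (X 1) ^ (k + 1 + l - p)) := by
      have h1 : ∀ p ∈ Finset.range (k + 1 + 1),
          C ((((if p = 0 then 0 else c1 (p - 1)) + (if p ≤ k then g2 p else 0) : ℕ)) : ℤ)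
            * (∏ q ∈ Finset.Icc 1 p, dd a q) * (X 1) ^ (k + 1 + l - p)
          = C (((if p = 0 then 0 else c1 (p - 1) : ℕ)) : ℤ)
              * (∏ q ∈ Finset.Icc 1 p, dd a q) * (X 1) ^ (k + 1 + l - p)
            + C (((if p ≤ k then g2 p else 0 : ℕ)) : ℤ)
              * (∏ q ∈ Finset.Icc 1 p, dd a q) * (X 1) ^ (k + 1 + l - p) := by
        intro p _
        rw [Nat.cast_add, map_add]
        ring
      rw [Finset.sum_congr rfl h1, Finset.sum_add_distrib]
      congr 1
      · rw [Finset.sum_range_succ']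
        have h0 : (if (0 : ℕ) = 0 then (0 : ℕ) else c1 (0 - 1)) = 0 := rfl
        rw [h0]
        simp only [Nat.cast_zero, map_zero, zero_mul, add_zero]
        apply Finset.sum_congr rfl
        intro p hp
        have h1 : (if p + 1 = 0 then (0 : ℕ) else c1 (p + 1 - 1)) = c1 p := by simp
        have h2 : k + 1 + l - (p + 1) = k + l - p := by omega
        rw [h1, h2]
      · rw [Finset.sum_range_succ]
        have h0 : (if k + 1 ≤ k then g2 (k + 1) else 0) = 0 := if_neg (by omega)
        rw [h0]
        simp only [Nat.cast_zero, map_zero, zero_mul, add_zero]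
        apply Finset.sum_congr rfl
        intro p hp
        rw [Finset.mem_range] at hp
        rw [if_pos (by omega : p ≤ k)]
    rw [hRHS, Fin.prod_univ_castSucc]
    simp only [Fin.coe_castSucc, Fin.val_succ, Fin.val_last]
    have expand : (∏ s : Fin k, (dd a (s.val + 1) + C ((b s.castSucc : ℤ)) * X 1))
          * (dd a (k + 1) + C ((b (Fin.last k) : ℤ)) * X 1) * (X 1) ^ l
        = ((∏ s : Fin k, (dd a (s.val + 1) + C ((b s.castSucc : ℤ)) * X 1)) * (X 1) ^ l)
            * dd a (k + 1)
          + C ((b (Fin.last k) : ℤ))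
            * ((∏ s : Fin k, (dd a (s.val + 1) + C ((b s.castSucc : ℤ)) * X 1))
                * (X 1) ^ (l + 1)) := by
      ring
    rw [expand, hc1, hc2, Finset.sum_mul, Finset.mul_sum, ← Finset.sum_add_distrib,
      ← Finset.sum_add_distrib]
    apply Finset.sum_congr rfl
    intro p hp
    rw [Finset.mem_range] at hp
    have hp' : p ≤ k := by omega
    rw [dd_shift a (p + 1) (k + 1), Finset.prod_Icc_succ_top (by omega : 1 ≤ p + 1)]
    have hcg2 : ((g2 p : ℕ) : ℤ)
        = (c1 p : ℤ) * (a (p + 1) - a (k + 1)) + (b (Fin.last k) : ℤ) * (c2 p : ℤ) := by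
      rw [hg2def]
      push_cast [he p hp']
      ring
    rw [hcg2, map_add, map_mul, map_mul]
    have h2 : k + (l + 1) - p = (k + l - p) + 1 := by omega
    have h3 : k + 1 + l - p = (k + l - p) + 1 := by omega
    rw [h2, h3, pow_succ]
    ring

/-- Let `m ≥ 2` and `a 1 ≥ ⋯ ≥ a (m-1) ≥ a m = 0` be integers. In `ℤ[X,Y]`
set `d i = X + (a 1 - a i)·Y`. Then for every strictly increasing sequence
`1 ≤ i₁ < ⋯ < i_k ≤ m` and every `l ≥ 0` there are nonnegative integers
`c₀,…,c_k` with `d_{i₁}⋯d_{i_k}·Y^l = ∑_{p=0}^{k} c_p·(d₁⋯d_p)·Y^{k+l-p}`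
(the product `d₁⋯d_p` being `1` when `p = 0`). -/
theorem stmt_6 (m : ℕ) (hm : 2 ≤ m) (a : ℕ → ℤ)
    (hanti : ∀ i j, 1 ≤ i → i ≤ j → j ≤ m → a j ≤ a i)
    (ham : a m = 0) :
    let Xv : MvPolynomial (Fin 2) ℤ := MvPolynomial.X 0
    let Yv : MvPolynomial (Fin 2) ℤ := MvPolynomial.X 1
    let d : ℕ → MvPolynomial (Fin 2) ℤ := fun i => Xv + MvPolynomial.C (a 1 - a i) * Yv
    ∀ (k : ℕ) (idx : Fin k → ℕ), StrictMono idx →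
      (∀ s, 1 ≤ idx s) → (∀ s, idx s ≤ m) → ∀ l : ℕ,
      ∃ c : ℕ → ℕ,
        (∏ s, d (idx s)) * Yv ^ l =
          ∑ p ∈ Finset.range (k + 1),
            MvPolynomial.C ((c p : ℤ)) * (∏ q ∈ Finset.Icc 1 p, d q) * Yv ^ (k + l - p) := by
  intro Xv Yv d k idx hmono h1 hum l
  have hd : d = dd a := rfl
  have hge' : ∀ n (h : n < k), n + 1 ≤ idx ⟨n, h⟩ := by
    intro n
    induction n with
    | zero => intro h; exact h1 _
    | succ n ihn =>
      intro h
      have h' : n < k := by omega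
      have h2 := ihn h'
      have h3 := hmono (show (⟨n, h'⟩ : Fin k) < ⟨n + 1, h⟩ from by simp [Fin.lt_def])
      omega
  have hge : ∀ s : Fin k, s.val + 1 ≤ idx s := by
    intro s
    have := hge' s.val s.isLt
    simpa using this
  have hkm : k ≤ m := by
    rcases k with _ | n
    · omega
    · have h2 := hge' n (by omega)
      have h3 := hum ⟨n, by omega⟩
      omega
  have hb : ∀ s : Fin k, d (idx s) = dd a (s.val + 1) +
      C (((a (s.val + 1) - a (idx s)).toNat : ℤ)) * X 1 := by
    intro s
    have hcast : (((a (s.val + 1) - a (idx s)).toNat : ℕ) : ℤ)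
        = a (s.val + 1) - a (idx s) := by
      have := hanti (s.val + 1) (idx s) (by omega) (hge s) (hum s)
      omega
    rw [hd, dd_shift a (s.val + 1) (idx s), hcast]
  obtain ⟨c, hc⟩ := helper m a hanti k hkm l (fun s => (a (s.val + 1) - a (idx s)).toNat)
  refine ⟨c, ?_⟩
  calc (∏ s, d (idx s)) * Yv ^ l
      = (∏ s : Fin k, (dd a (s.val + 1) +
          C (((a (s.val + 1) - a (idx s)).toNat : ℤ)) * X 1)) * (X 1) ^ l := by
        rw [Finset.prod_congr rfl (fun s _ => hb s)]
    _ = _ := by rw [hc]; rfl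
end
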